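/- Let n ∈ ℕ, let M be a submonoid of ℕⁿ (under addition), and let G be the subgroup of ℤⁿ generated by the image of M, with m = rank of G as a free abelian group. Then there exists a constant C > 0 such that for every N ≥ 1, the number of elements α ∈ M with α₁ + ⋯ + αₙ ≤ N is at most C·N^m. -/

import Mathlib

set_option maxHeartbeats 1000000 in
/-- let `M` be a submonoid of `ℕⁿ` and `G` the subgroup of `ℤⁿ` it
generates (its Grothendieck group), of rank `m`.  Then the number of `α ∈ M` with
`α₁ + ⋯ + αₙ ≤ N` is at most `C · N^m` for some constant `C > 0`. -/
theorem card_le_of_rank (n : ℕ) (M : AddSubmonoid (Fin n → ℕ))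
    (m : ℕ)
    (hm : m = Module.finrank ℤ
      ↥(Submodule.span ℤ ((fun α : Fin n → ℕ => fun i => (α i : ℤ)) '' (M : Set (Fin n → ℕ))))) :
    ∃ C : ℝ, 0 < C ∧ ∀ N : ℕ, 1 ≤ N →
      (({α : Fin n → ℕ | α ∈ M ∧ ∑ i, α i ≤ N}.ncard : ℝ)) ≤ C * (N : ℝ) ^ m := by
  classical
  set f : (Fin n → ℕ) → (Fin n → ℤ) := fun α : Fin n → ℕ => fun i => (α i : ℤ) with hf
  set V : Submodule ℤ (Fin n → ℤ) := Submodule.span ℤ (f '' (M : Set (Fin n → ℕ))) with hVdef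
  have hmemV : ∀ α : Fin n → ℕ, α ∈ M → f α ∈ V :=
    fun α hα => Submodule.subset_span (Set.mem_image_of_mem f hα)
  -- a basis of V indexed by Fin m
  have hcard : Fintype.card (Module.Free.ChooseBasisIndex ℤ V) = m := by
    rw [hm]; exact (Module.finrank_eq_card_chooseBasisIndex ℤ ↥V).symm
  let b : Module.Basis (Fin m) ℤ V :=
    (Module.Free.chooseBasis ℤ V).reindex (Fintype.equivFinOfCardEq hcard)
  -- the cast map to ℚⁿ
  let L : (Fin n → ℤ) →ₗ[ℤ] (Fin n → ℚ) :=
    { toFun := fun x i => (x i : ℚ)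
      map_add' := by intros x y; funext i; simp
      map_smul' := by
        intros c x; funext i
        simp [Pi.smul_apply, zsmul_eq_mul] }
  have hLapp : ∀ (x : Fin n → ℤ) (i : Fin n), L x i = (x i : ℚ) := fun _ _ => rfl
  have hLinj : Function.Injective L := by
    intro x y hxy
    funext i
    have : (x i : ℚ) = (y i : ℚ) := by rw [← hLapp, ← hLapp, hxy]
    exact_mod_cast this
  -- the basis vectors, as vectors in ℚⁿ, are ℚ-linearly independent
  set w : Fin m → (Fin n → ℚ) := fun j => L (b j : Fin n → ℤ) with hwdef
  have hwZ : LinearIndependent ℤ w := by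
    have := b.linearIndependent.map' (L.comp V.subtype)
      (by rw [LinearMap.ker_eq_bot]; exact hLinj.comp V.injective_subtype)
    exact this
  have hwli : LinearIndependent ℚ w := (LinearIndependent.iff_fractionRing ℤ ℚ).mp hwZ
  -- coordinate functionals on ℚⁿ
  set W : Submodule ℚ (Fin n → ℚ) := Submodule.span ℚ (Set.range w) with hWdef
  obtain ⟨W', hW'⟩ := Submodule.exists_isCompl W
  let proj : (Fin n → ℚ) →ₗ[ℚ] W := Submodule.linearProjOfIsCompl W W' hW'
  let bw : Module.Basis (Fin m) ℚ W := Module.Basis.span hwli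
  let g : Fin m → ((Fin n → ℚ) →ₗ[ℚ] ℚ) :=
    fun i => (Finsupp.lapply i).comp (bw.repr.toLinearMap.comp proj)
  have hgw : ∀ i j, g i (w j) = if j = i then 1 else 0 := by
    intro i j
    have h1 : proj (w j) = bw j := by
      have h2 : w j = ((bw j : (Fin n → ℚ))) := congrArg Subtype.val (Module.Basis.span_apply hwli j).symm
      rw [show w j = ((bw j : (Fin n → ℚ))) from h2]
      exact Submodule.linearProjOfIsCompl_apply_left hW' (bw j)
    show (bw.repr (proj (w j))) i = _
    rw [h1, bw.repr_self, Finsupp.single_apply]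
  -- key identity : the ℚ-functionals compute the ℤ-coordinates
  have key : ∀ (i : Fin m) (x : V), g i (L (x : Fin n → ℤ)) = ((b.repr x i : ℤ) : ℚ) := by
    intro i
    have keyl : ((g i).restrictScalars ℤ).comp (L.comp V.subtype)
        = (Algebra.linearMap ℤ ℚ).comp ((Finsupp.lapply i).comp b.repr.toLinearMap) := by
      apply b.ext
      intro j
      simp only [LinearMap.coe_comp, Function.comp_apply, LinearMap.coe_restrictScalars,
        Submodule.coe_subtype, LinearEquiv.coe_coe, Finsupp.lapply_apply, Module.Basis.repr_self,
        Finsupp.single_apply, Algebra.linearMap_apply]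
      rw [show L ((b j : Fin n → ℤ)) = w j from rfl, hgw i j]
      split <;> simp
    intro x
    have := congrFun (congrArg DFunLike.coe keyl) x
    simpa using this
  -- a uniform bound on the functionals on standard basis vectors
  set Knat : ℕ := 1 + ∑ i : Fin m, ∑ j : Fin n, ⌈|g i (Pi.single j 1)|⌉₊ with hKdef
  have hK1 : 1 ≤ Knat := Nat.le_add_right 1 _
  have hKb : ∀ i j, |g i (Pi.single j 1)| ≤ (Knat : ℚ) := by
    intro i j
    have h1 : |g i (Pi.single j 1)| ≤ (⌈|g i (Pi.single j 1)|⌉₊ : ℚ) := Nat.le_ceil _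
    have h2 : ⌈|g i (Pi.single j 1)|⌉₊ ≤ Knat := by
      have h4 := Finset.single_le_sum (f := fun j' => ⌈|g i (Pi.single j' 1)|⌉₊)
        (fun _ _ => Nat.zero_le _) (Finset.mem_univ j)
      have h3 := Finset.single_le_sum (f := fun i' => ∑ j' : Fin n, ⌈|g i' (Pi.single j' 1)|⌉₊)
        (fun _ _ => Nat.zero_le _) (Finset.mem_univ i)
      exact le_trans (le_trans h4 h3) (Nat.le_add_left _ 1)
    exact h1.trans (by exact_mod_cast h2)
  clear_value b L w g
  -- the coordinate bound for elements of M in the box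
  have hbound : ∀ N : ℕ, ∀ α : Fin n → ℕ, ∀ hα : α ∈ M, (∑ i, α i) ≤ N → ∀ i : Fin m,
      |b.repr ⟨f α, hmemV α hα⟩ i| ≤ (Knat * N : ℤ) := by
    intro N α hα hsum i
    have hx : L (f α) = ∑ j : Fin n, ((α j : ℚ)) • (Pi.single j (1 : ℚ) : Fin n → ℚ) := by
      funext k
      rw [hLapp]
      simp [hf, Pi.single_apply, Finset.sum_ite_eq']
    have hgx : g i (L (f α)) = ∑ j : Fin n, (α j : ℚ) * g i (Pi.single j 1) := by
      rw [hx, map_sum]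
      simp [smul_eq_mul]
    have habs : |g i (L (f α))| ≤ (Knat : ℚ) * N := by
      rw [hgx]
      calc |∑ j : Fin n, (α j : ℚ) * g i (Pi.single j 1)|
          ≤ ∑ j : Fin n, |(α j : ℚ) * g i (Pi.single j 1)| := Finset.abs_sum_le_sum_abs _ _
        _ ≤ ∑ j : Fin n, (α j : ℚ) * (Knat : ℚ) := by
            apply Finset.sum_le_sum
            intro j _
            rw [abs_mul, abs_of_nonneg (by positivity : (0:ℚ) ≤ (α j : ℚ))]
            exact mul_le_mul_of_nonneg_left (hKb i j) (by positivity)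
        _ = (∑ j : Fin n, (α j : ℚ)) * (Knat : ℚ) := by rw [Finset.sum_mul]
        _ ≤ (N : ℚ) * (Knat : ℚ) := by
            apply mul_le_mul_of_nonneg_right _ (by positivity)
            exact_mod_cast hsum
        _ = (Knat : ℚ) * N := by ring
    have hcast : ((b.repr ⟨f α, hmemV α hα⟩ i : ℤ) : ℚ) = g i (L (f α)) := (key i _).symm
    have : |((b.repr ⟨f α, hmemV α hα⟩ i : ℤ) : ℚ)| ≤ ((Knat * N : ℤ) : ℚ) := by
      rw [hcast]; push_cast; exact habs
    exact_mod_cast this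
  -- counting
  refine ⟨(3 * Knat : ℝ) ^ m, by positivity, ?_⟩
  intro N hN
  set s : Set (Fin n → ℕ) := {α : Fin n → ℕ | α ∈ M ∧ ∑ i, α i ≤ N} with hsdef
  let F : (Fin n → ℕ) → (Fin m → ℤ) :=
    fun α => if h : f α ∈ V then (fun i => b.repr ⟨f α, h⟩ i) else 0
  let T : Finset (Fin m → ℤ) :=
    Fintype.piFinset fun _ : Fin m => Finset.Icc (-(Knat * N : ℤ)) (Knat * N)
  have hmaps : ∀ α ∈ s, F α ∈ (T : Set (Fin m → ℤ)) := by
    intro α hα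
    obtain ⟨hαM, hαN⟩ := hα
    have hmem := hmemV α hαM
    simp only [F, T, dif_pos hmem, Finset.coe_sort_coe, Finset.mem_coe,
      Fintype.mem_piFinset]
    intro i
    rw [Finset.mem_Icc]
    have := hbound N α hαM hαN i
    rw [abs_le] at this
    exact this
  have hinj : Set.InjOn F s := by
    intro α hα β hβ hFαβ
    have hmα := hmemV α hα.1
    have hmβ := hmemV β hβ.1
    have h1 : (fun i => b.repr ⟨f α, hmα⟩ i) = (fun i => b.repr ⟨f β, hmβ⟩ i) := by
      have := hFαβ
      simpa only [F, dif_pos hmα, dif_pos hmβ] using this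
    have h2 : (⟨f α, hmα⟩ : V) = ⟨f β, hmβ⟩ :=
      b.ext_elem fun i => congrFun h1 i
    have h3 : f α = f β := congrArg Subtype.val h2
    funext i
    exact Nat.cast_injective (congrFun h3 i)
  have hcount : s.ncard ≤ T.card := by
    have := Set.ncard_le_ncard_of_injOn F hmaps hinj T.finite_toSet
    rwa [Set.ncard_coe_finset] at this
  have hTcard : T.card = (2 * Knat * N + 1) ^ m := by
    rw [Fintype.card_piFinset]
    simp only [Int.card_Icc]
    rw [Finset.prod_const, Finset.card_univ, Fintype.card_fin]
    congr 1
    rw [show ((Knat : ℤ) * N + 1 - -((Knat : ℤ) * N)) = ((2 * Knat * N + 1 : ℕ) : ℤ) by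
      push_cast; ring, Int.toNat_natCast]
  have hle : (2 * Knat * N + 1) ^ m ≤ (3 * Knat * N) ^ m := by
    apply Nat.pow_le_pow_left
    have h1 : 1 ≤ Knat * N := Nat.one_le_iff_ne_zero.mpr (Nat.mul_ne_zero (by omega) (by omega))
    calc 2 * Knat * N + 1 = 2 * (Knat * N) + 1 := by ring
      _ ≤ 3 * (Knat * N) := by omega
      _ = 3 * Knat * N := by ring
  calc (s.ncard : ℝ) ≤ ((2 * Knat * N + 1) ^ m : ℕ) := by
        exact_mod_cast hcount.trans_eq hTcard
    _ ≤ ((3 * Knat * N) ^ m : ℕ) := by exact_mod_cast hle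
    _ = (3 * Knat : ℝ) ^ m * (N : ℝ) ^ m := by push_cast; ring
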